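/- Given a Set Cover instance (universe [n], sets S_1,...,S_m, integer k), construct the star T with center c and leaves v_1,...,v_m; place candidate j at leaf v_j, and give voter i the substar on {v_j : i ∈ S_j} ∪ {c}. Then there exist k sets covering [n] if and only if there exists a committee W of k candidates such that every voter approves at least one member of W (i.e., Chamberlin–Courant score equals n). -/
import Mathlib


/-- Correctness of the star reduction from Set Cover: with the star on vertices
`Fin (m+1)` (center `0`, leaf `j.succ` for each set `S j`), candidate `j`'s subtree the
singleton `{j.succ}`, and voter `i`'s subtree `{j.succ : i ∈ S j} ∪ {0}`, there exist `k`
sets covering the universe iff there is a committee of `k` candidates such that every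
voter approves at least one member (Chamberlin–Courant score `n`). -/
theorem star_reduction_correct (n m k : ℕ) (S : Fin m → Finset (Fin n))
    (voterTree : Fin n → Finset (Fin (m + 1)))
    (hVT : ∀ i, voterTree i =
      insert 0 ((Finset.univ.filter (fun j : Fin m => i ∈ S j)).image Fin.succ)) :
    (∃ F : Finset (Fin m), F.card = k ∧ ∀ i : Fin n, ∃ j ∈ F, i ∈ S j) ↔
    (∃ W : Finset (Fin m), W.card = k ∧
      ∀ i : Fin n, ∃ j ∈ W, Fin.succ j ∈ voterTree i) := by
  have key : ∀ (i : Fin n) (j : Fin m), Fin.succ j ∈ voterTree i ↔ i ∈ S j := by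
    intro i j
    rw [hVT i]
    simp [Fin.succ_ne_zero, Fin.succ_inj]
  constructor
  · rintro ⟨F, hF, hcov⟩
    exact ⟨F, hF, fun i => by
      obtain ⟨j, hj, hij⟩ := hcov i
      exact ⟨j, hj, (key i j).mpr hij⟩⟩
  · rintro ⟨W, hW, hcov⟩
    exact ⟨W, hW, fun i => by
      obtain ⟨j, hj, hij⟩ := hcov i
      exact ⟨j, hj, (key i j).mp hij⟩⟩
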